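/- Let $n$ be a positive integer, let $H_1$ be a graph with at least $n$ vertices, and let $G_1$ be a graph that is universal for the family of $n$-vertex subgraphs of $H_1$. Then for any graph $H_2$, the strong product $G_1 \boxtimes H_2$ is universal for the family of $n$-vertex subgraphs of $H_1 \boxtimes H_2$. -/

import Mathlib

/-- The strong product of two simple graphs. -/
def strongProd {α β : Type*} (A : SimpleGraph α) (B : SimpleGraph β) :
    SimpleGraph (α × β) where
  Adj p q := p ≠ q ∧ (p.1 = q.1 ∨ A.Adj p.1 q.1) ∧ (p.2 = q.2 ∨ B.Adj p.2 q.2)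
  symm := by
    constructor
    rintro ⟨x₁, y₁⟩ ⟨x₂, y₂⟩ ⟨hne, h1, h2⟩
    exact ⟨Ne.symm hne, h1.imp Eq.symm A.adj_symm, h2.imp Eq.symm B.adj_symm⟩
  loopless := by constructor; rintro p ⟨hne, -, -⟩; exact hne rfl

/-- `H` is isomorphic to a (not necessarily induced) subgraph of `G`. -/
def CopyIn {γ δ : Type*} (H : SimpleGraph γ) (G : SimpleGraph δ) : Prop :=
  ∃ f : γ → δ, Function.Injective f ∧ ∀ a b, H.Adj a b → G.Adj (f a) (f b)

/-- If `G₁` is universal for `n`-vertex subgraphs of `H₁` (which has at least `n`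
vertices), then `G₁ ⊠ H₂` is universal for `n`-vertex subgraphs of `H₁ ⊠ H₂`. -/
theorem stmt1 {α₁ β₁ α₂ : Type*} (n : ℕ) (hn : 0 < n)
    (H₁ : SimpleGraph α₁) (G₁ : SimpleGraph β₁) (H₂ : SimpleGraph α₂)
    (hbig : ∃ f : Fin n → α₁, Function.Injective f)
    (huniv : ∀ F : SimpleGraph (Fin n), CopyIn F H₁ → CopyIn F G₁) :
    ∀ F : SimpleGraph (Fin n),
      CopyIn F (strongProd H₁ H₂) → CopyIn F (strongProd G₁ H₂) := by
  classical
  haveI : Nonempty (Fin n) := ⟨⟨0, hn⟩⟩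
  rintro F ⟨f, hfinj, hfadj⟩
  obtain ⟨u, huinj⟩ := hbig
  set x : Fin n → α₁ := fun i => (f i).1 with hx
  set y : Fin n → α₂ := fun i => (f i).2 with hy
  set S : Finset α₁ := Finset.image x Finset.univ with hS
  have hScard : S.card ≤ n := (Finset.card_image_le).trans (by simp)
  have hTcard : n ≤ (S ∪ Finset.image u Finset.univ).card := by
    calc n = (Finset.image u Finset.univ).card := by
            rw [Finset.card_image_of_injective _ huinj]; simp
      _ ≤ (S ∪ Finset.image u Finset.univ).card :=
            Finset.card_le_card Finset.subset_union_right
  obtain ⟨T, hST, _, hTn⟩ :=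
    Finset.exists_subsuperset_card_eq
      (Finset.subset_union_left (s₂ := Finset.image u Finset.univ)) hScard hTcard
  -- an injective enumeration of T
  let e : T ≃ Fin n := T.equivFinOfCardEq hTn
  let X : Fin n → α₁ := fun i => (e.symm i : α₁)
  have hXinj : Function.Injective X := fun a b h => by
    have : e.symm a = e.symm b := Subtype.ext h
    simpa using e.symm.injective this
  have hXmem : ∀ i, x i ∈ Set.range X := by
    intro i
    have hxi : x i ∈ T := hST (Finset.mem_image.2 ⟨i, Finset.mem_univ _, rfl⟩)
    exact ⟨e ⟨x i, hxi⟩, by simp [X]⟩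
  set c : Fin n → Fin n := fun i => Function.invFun X (x i) with hc
  have hXc : ∀ i, X (c i) = x i := fun i => Function.invFun_eq (hXmem i)
  -- the pattern graph
  obtain ⟨g, hginj, hgadj⟩ := huniv (H₁.comap X) ⟨X, hXinj, fun a b h => h⟩
  have key : ∀ i j, g (c i) = g (c j) → y i = y j → i = j := by
    intro i j h1 h2
    have hcij : c i = c j := hginj h1
    have hx' : x i = x j := by rw [← hXc i, ← hXc j, hcij]
    exact hfinj (Prod.ext hx' h2)
  refine ⟨fun i => (g (c i), y i), ?_, ?_⟩
  · intro i j hij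
    obtain ⟨h1, h2⟩ := Prod.ext_iff.mp hij
    exact key i j h1 h2
  · intro a b hab
    obtain ⟨hne, h1, h2⟩ := hfadj a b hab
    refine ⟨?_, ?_, h2⟩
    · intro h
      obtain ⟨h1', h2'⟩ := Prod.ext_iff.mp h
      exact F.ne_of_adj hab (key a b h1' h2')
    · rcases h1 with h1 | h1
      · left
        show g (c a) = g (c b)
        have : c a = c b := hXinj (by rw [hXc a, hXc b]; exact h1)
        rw [this]
      · right
        show G₁.Adj (g (c a)) (g (c b))
        refine hgadj _ _ ?_
        show H₁.Adj (X (c a)) (X (c b))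
        rw [hXc a, hXc b]; exact h1
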